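/- Let φ ∈ L²(ℝ), let 𝒱_0 ⊆ L²(ℝ) be the closed linear span of { φ(· − k) : k ∈ ℤ }, and let U : L²(ℝ) → L²(ℝ) be the unitary operator (Uf)(x) = 2^{−1/2} f(x/2). Assume that the family { φ(· − k) : k ∈ ℤ } is a frame for 𝒱_0, i.e., there exist constants 0 < c_1 ≤ c_2 such that c_1‖f‖² ≤ Σ_{k∈ℤ} |⟨φ(·−k), f⟩|² ≤ c_2‖f‖² for all f ∈ 𝒱_0. Then ⋂_{n≥0} U^n 𝒱_0 = {0}. -/

import Mathlib

open MeasureTheory Complex Real Filter Set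
open scoped ComplexConjugate

noncomputable section

namespace Stmt15Aux

abbrev H := Lp ℂ 2 (volume : Measure ℝ)

def cc : ℂ := ((Real.sqrt 2 : ℂ))⁻¹

lemma conj_cc : conj cc = cc := by
  simp [cc, ← Complex.ofReal_inv]

lemma cc_mul_cc : cc * cc = (2 : ℂ)⁻¹ := by
  rw [cc, ← mul_inv, ← Complex.ofReal_mul, Real.mul_self_sqrt (by norm_num)]
  norm_num

lemma qmp_div (a : ℝ) (ha : a ≠ 0) :
    Measure.QuasiMeasurePreserving (fun x : ℝ => x / a) volume volume := by
  refine ⟨measurable_id.div_const a, ?_⟩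
  have h : (fun x : ℝ => x / a) = fun x => a⁻¹ * x := by
    funext x; rw [div_eq_inv_mul]
  rw [h, Real.map_volume_mul_left (inv_ne_zero ha)]
  exact Measure.smul_absolutelyContinuous

lemma memTrans {φ : ℝ → ℂ} (hφ : MemLp φ 2 (volume : Measure ℝ)) (k : ℤ) :
    MemLp (fun x : ℝ => φ (x - k)) 2 (volume : Measure ℝ) := by
  simpa [Function.comp_def] using
    hφ.comp_measurePreserving (measurePreserving_sub_right volume (k : ℝ))

def phiT (φ : ℝ → ℂ) (hφ : MemLp φ 2 (volume : Measure ℝ)) (k : ℤ) : H :=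
  (memTrans hφ k).toLp _

lemma normsq (g : H) : ‖g‖ ^ 2 = ∫ x, ‖(g : ℝ → ℂ) x‖ ^ 2 := by
  have h1 : RCLike.re (inner ℂ g g : ℂ) = ‖g‖ ^ 2 := inner_self_eq_norm_sq g
  rw [← h1, L2.inner_def, ← integral_re (L2.integrable_inner (𝕜 := ℂ) g g)]
  refine integral_congr_ae (Eventually.of_forall fun x => ?_)
  exact inner_self_eq_norm_sq ((g : ℝ → ℂ) x)

lemma innerφ (φ : ℝ → ℂ) (hφ : MemLp φ 2 (volume : Measure ℝ)) (k : ℤ) (f : H) :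
    (inner ℂ (phiT φ hφ k) f : ℂ) = ∫ x : ℝ, conj (φ (x - k)) * (f : ℝ → ℂ) x := by
  rw [L2.inner_def]
  refine integral_congr_ae ?_
  filter_upwards [(memTrans hφ k).coeFn_toLp] with x hx
  rw [RCLike.inner_apply]
  simp only [phiT] at hx ⊢
  rw [hx, mul_comm]


section Ulem

variable (U : H →L[ℂ] H)
  (hU : ∀ f : H, ⇑(U f) =ᵐ[volume] fun x => ((Real.sqrt 2 : ℂ))⁻¹ * f (x / 2))

include hU

lemma coe_upow (n : ℕ) (f : H) :
    ⇑((U ^ n) f) =ᵐ[volume] fun x => cc ^ n * f (x / 2 ^ n) := by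
  induction n with
  | zero =>
    have h : (fun x : ℝ => cc ^ 0 * f (x / 2 ^ 0)) = ⇑f := by
      funext x; simp
    rw [pow_zero, ContinuousLinearMap.one_apply, h]
  | succ n ih =>
    have h1 : (U ^ (n + 1)) f = U ((U ^ n) f) := by
      rw [pow_succ']; rfl
    rw [h1]
    refine (hU ((U ^ n) f)).trans ?_
    have h3 := (qmp_div 2 two_ne_zero).ae_eq_comp ih
    filter_upwards [h3] with x hx
    have hx' : (⇑((U ^ n) f)) (x / 2) = cc ^ n * f (x / 2 / 2 ^ n) := hx
    rw [hx']
    have : x / 2 / 2 ^ n = x / 2 ^ (n + 1) := by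
      rw [div_div, ← pow_succ']
    rw [this, cc, pow_succ' ((Real.sqrt 2 : ℂ))⁻¹ n, mul_assoc]

lemma inner_U (f g : H) : (inner ℂ (U f) (U g) : ℂ) = inner ℂ f g := by
  rw [L2.inner_def, L2.inner_def]
  have step1 : (∫ x, (inner ℂ ((U f : ℝ → ℂ) x) ((U g : ℝ → ℂ) x) : ℂ))
      = ∫ x, (fun y => conj (cc * f y) * (cc * g y)) (x / 2) := by
    refine integral_congr_ae ?_
    filter_upwards [hU f, hU g] with x h1 h2
    rw [RCLike.inner_apply, h1, h2]
    simp [cc]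
    ring
  rw [step1, Measure.integral_comp_div (fun y => conj (cc * f y) * (cc * g y)) 2]
  have step2 : (∫ y, conj (cc * f y) * (cc * g y))
      = (2 : ℂ)⁻¹ * ∫ y, (inner ℂ ((f : ℝ → ℂ) y) ((g : ℝ → ℂ) y) : ℂ) := by
    rw [← integral_const_mul]
    refine integral_congr_ae (Eventually.of_forall fun y => ?_)
    show conj (cc * f y) * (cc * g y) = 2⁻¹ * (inner ℂ ((f : ℝ → ℂ) y) ((g : ℝ → ℂ) y) : ℂ)
    rw [RCLike.inner_apply, mul_comm ((g : ℝ → ℂ) y)]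
    calc conj (cc * f y) * (cc * g y) = (conj cc * cc) * (conj (f y) * g y) := by
          rw [map_mul]; ring
      _ = (2 : ℂ)⁻¹ * (conj (f y) * g y) := by rw [conj_cc, cc_mul_cc]
  rw [step2, Complex.real_smul, ← mul_assoc]
  norm_num

lemma inner_upow (n : ℕ) (f g : H) :
    (inner ℂ ((U ^ n) f) ((U ^ n) g) : ℂ) = inner ℂ f g := by
  induction n with
  | zero => simp
  | succ n ih =>
    have h1 : ∀ h : H, (U ^ (n + 1)) h = U ((U ^ n) h) := by
      intro h; rw [pow_succ']; rfl
    rw [h1, h1, inner_U U hU, ih]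

lemma norm_upow (n : ℕ) (f : H) : ‖(U ^ n) f‖ = ‖f‖ := by
  have h : ‖(U ^ n) f‖ ^ 2 = ‖f‖ ^ 2 := by
    rw [← inner_self_eq_norm_sq (𝕜 := ℂ), ← inner_self_eq_norm_sq (𝕜 := ℂ) f,
      inner_upow U hU]
  have := congrArg Real.sqrt h
  simpa [Real.sqrt_sq, norm_nonneg] using this

lemma norm_upow_le (n : ℕ) : ‖U ^ n‖ ≤ 1 :=
  ContinuousLinearMap.opNorm_le_bound _ zero_le_one
    (fun f => by rw [norm_upow U hU, one_mul])

lemma norm_adj_le (n : ℕ) (f : H) : ‖ContinuousLinearMap.adjoint (U ^ n) f‖ ≤ ‖f‖ := by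
  refine le_trans (ContinuousLinearMap.le_opNorm _ f) ?_
  rw [LinearIsometryEquiv.norm_map]
  exact mul_le_of_le_one_left (norm_nonneg f) (norm_upow_le U hU n)

end Ulem

def V0sub (φ : ℝ → ℂ) : Submodule ℂ H :=
  Submodule.topologicalClosure (Submodule.span ℂ
      {h : H | ∃ k : ℤ, ⇑h =ᵐ[volume] fun x => φ (x - k)})

section Frame

variable (φ : ℝ → ℂ) (hφ : MemLp φ 2 (volume : Measure ℝ))
  (V0 : Set H)
  (hV0 : V0 = closure (Submodule.span ℂ
      {h : H | ∃ k : ℤ, ⇑h =ᵐ[volume] fun x => φ (x - k)} : Set H))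
  (c1 c2 : ℝ) (hc1 : 0 < c1) (hc12 : c1 ≤ c2)
  (hframe : ∀ f ∈ V0,
      c1 * ‖f‖ ^ 2 ≤ ∑' k : ℤ, ‖∫ x : ℝ, conj (φ (x - k)) * f x‖ ^ 2 ∧
      ∑' k : ℤ, ‖∫ x : ℝ, conj (φ (x - k)) * f x‖ ^ 2 ≤ c2 * ‖f‖ ^ 2)



lemma frame_inner_eq (f : H) (k : ℤ) :
    ‖∫ x : ℝ, conj (φ (x - k)) * f x‖ ^ 2 = ‖(inner ℂ (phiT φ hφ k) f : ℂ)‖ ^ 2 := by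
  rw [innerφ]

include hframe in
lemma frame_lower (f : H) (hf : f ∈ V0) :
    c1 * ‖f‖ ^ 2 ≤ ∑' k : ℤ, ‖(inner ℂ (phiT φ hφ k) f : ℂ)‖ ^ 2 := by
  have := (hframe f hf).1
  simpa only [frame_inner_eq φ hφ] using this

include hframe in
lemma frame_upper (f : H) (hf : f ∈ V0) :
    ∑' k : ℤ, ‖(inner ℂ (phiT φ hφ k) f : ℂ)‖ ^ 2 ≤ c2 * ‖f‖ ^ 2 := by
  have := (hframe f hf).2
  simpa only [frame_inner_eq φ hφ] using this

include hc1 hframe in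
lemma frame_summable (f : H) (hf : f ∈ V0) :
    Summable (fun k : ℤ => ‖(inner ℂ (phiT φ hφ k) f : ℂ)‖ ^ 2) := by
  by_contra hs
  have h0 := frame_lower φ hφ V0 c1 c2 hframe f hf
  rw [tsum_eq_zero_of_not_summable hs] at h0
  have hf0 : f = 0 := by
    have : ‖f‖ ^ 2 ≤ 0 := by nlinarith
    have : ‖f‖ = 0 := by nlinarith [norm_nonneg f, sq_nonneg ‖f‖]
    exact norm_eq_zero.mp this
  apply hs
  subst hf0
  simp only [inner_zero_right, norm_zero]
  simpa using summable_zero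

lemma phiT_mem (k : ℤ) : phiT φ hφ k ∈ V0sub φ :=
  Submodule.le_topologicalClosure _
    (Submodule.subset_span ⟨k, (memTrans hφ k).coeFn_toLp⟩)

include hV0 in
lemma V0_eq : V0 = (V0sub φ : Set H) := by
  rw [hV0, V0sub, Submodule.topologicalClosure_coe]

include hV0 hc1 hc12 hframe in
lemma upper_all (f : H) :
    Summable (fun k : ℤ => ‖(inner ℂ (phiT φ hφ k) f : ℂ)‖ ^ 2) ∧
    ∑' k : ℤ, ‖(inner ℂ (phiT φ hφ k) f : ℂ)‖ ^ 2 ≤ c2 * ‖f‖ ^ 2 := by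
  haveI : CompleteSpace (V0sub φ) :=
    (Submodule.isClosed_topologicalClosure _).completeSpace_coe
  set P := (V0sub φ).orthogonalProjectionOnto with hP
  have hkey : ∀ k : ℤ, (inner ℂ (phiT φ hφ k) f : ℂ) = inner ℂ (phiT φ hφ k) ((P f : H)) := by
    intro k
    have horth : f - (P f : H) ∈ (V0sub φ)ᗮ := (V0sub φ).sub_starProjection_mem_orthogonal f
    have h0 : (inner ℂ (phiT φ hφ k) (f - (P f : H)) : ℂ) = 0 :=
      Submodule.inner_right_of_mem_orthogonal (phiT_mem φ hφ k) horth
    rw [inner_sub_right] at h0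
    linear_combination h0
  have hmem : ((P f : H)) ∈ V0 := by
    rw [V0_eq φ V0 hV0]
    exact (P f).2
  have hnorm : ‖(P f : H)‖ ≤ ‖f‖ := by
    refine le_trans (ContinuousLinearMap.le_opNorm P f) ?_
    calc ‖P‖ * ‖f‖ ≤ 1 * ‖f‖ :=
          mul_le_mul_of_nonneg_right (Submodule.orthogonalProjectionOnto_norm_le _) (norm_nonneg f)
      _ = ‖f‖ := one_mul _
  constructor
  · simp only [hkey]
    exact frame_summable φ hφ V0 c1 c2 hc1 hframe _ hmem
  · simp only [hkey]
    refine le_trans (frame_upper φ hφ V0 c1 c2 hframe _ hmem) ?_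
    have hc2 : 0 ≤ c2 := le_trans hc1.le hc12
    have : ‖(P f : H)‖ ^ 2 ≤ ‖f‖ ^ 2 := by
      nlinarith [norm_nonneg ((P f : H))]
    nlinarith

end Frame

section Decay

variable (U : H →L[ℂ] H)
  (hU : ∀ f : H, ⇑(U f) =ᵐ[volume] fun x => ((Real.sqrt 2 : ℂ))⁻¹ * f (x / 2))
  (φ : ℝ → ℂ) (hφ : MemLp φ 2 (volume : Measure ℝ))

include hφ in
lemma p_integrable : Integrable (fun x => ‖φ x‖ ^ 2) (volume : Measure ℝ) := by
  have := hφ.integrable_norm_rpow (by norm_num) (by norm_num)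
  have h2 : (2 : ENNReal).toReal = ((2 : ℕ) : ℝ) := by norm_num
  simpa [h2, Real.rpow_natCast] using this

lemma norm_cc_sq : ‖cc‖ ^ 2 = (2 : ℝ)⁻¹ := by
  rw [cc]
  rw [norm_inv, Complex.norm_real, Real.norm_eq_abs,
    _root_.abs_of_nonneg (Real.sqrt_nonneg 2)]
  rw [inv_pow, Real.sq_sqrt (by norm_num : (0:ℝ) ≤ 2)]

include hU in
lemma coe_upow_phiT (n : ℕ) (k : ℤ) :
    ⇑((U ^ n) (phiT φ hφ k)) =ᵐ[volume]
      fun x => cc ^ n * φ (x / 2 ^ n - k) := by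
  refine (coe_upow U hU n (phiT φ hφ k)).trans ?_
  have h2n : (2 : ℝ) ^ n ≠ 0 := by positivity
  have h3 := (qmp_div (2 ^ n) h2n).ae_eq_comp ((memTrans hφ k).coeFn_toLp)
  filter_upwards [h3] with x hx
  have hx' : (⇑(phiT φ hφ k)) (x / 2 ^ n) = φ (x / 2 ^ n - k) := hx
  rw [hx']

include hU in
lemma term_bound (n : ℕ) (k : ℤ) {h0 : ℝ → ℂ} (hh : MemLp h0 2 (volume : Measure ℝ))
    (R : ℝ) (hsupp : ∀ x : ℝ, R < |x| → h0 x = 0) :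
    ‖(inner ℂ ((U ^ n) (phiT φ hφ k)) (hh.toLp h0) : ℂ)‖ ^ 2 ≤
      ‖hh.toLp h0‖ ^ 2 *
        ∫ x in Icc (-(R / 2 ^ n) - k) (R / 2 ^ n - k), ‖φ x‖ ^ 2 := by
  set th := hh.toLp h0 with hth
  set δ : ℝ := R / 2 ^ n with hδ
  set ψ : ℝ → ℂ := fun x => cc ^ n * φ (x / 2 ^ n - k) with hψ
  have hψae : ⇑((U ^ n) (phiT φ hφ k)) =ᵐ[volume] ψ := coe_upow_phiT U hU φ hφ n k
  have hψmem : MemLp ψ 2 (volume : Measure ℝ) := (Lp.memLp _).ae_eq hψae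
  set K : Set ℝ := Icc (-R) R with hK
  have hKmeas : MeasurableSet K := measurableSet_Icc
  set ψ1 : ℝ → ℂ := K.indicator ψ with hψ1
  have hψ1mem : MemLp ψ1 2 (volume : Measure ℝ) := hψmem.indicator hKmeas
  set e := hψ1mem.toLp ψ1 with he
  have h2npos : (0:ℝ) < 2 ^ n := by positivity
  have hie : (inner ℂ ((U ^ n) (phiT φ hφ k)) th : ℂ) = inner ℂ e th := by
    rw [L2.inner_def, L2.inner_def]
    refine integral_congr_ae ?_
    filter_upwards [hψae, hψ1mem.coeFn_toLp, hh.coeFn_toLp] with x h1 h2 h3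
    rw [RCLike.inner_apply, RCLike.inner_apply, h1, h2, h3]
    by_cases hx : x ∈ K
    · rw [show ψ1 x = ψ x from Set.indicator_of_mem hx ψ]
    · have hx' : R < |x| := by
        rw [hK, Set.mem_Icc, not_and_or, not_le, not_le] at hx
        rcases hx with hx | hx
        · exact lt_of_lt_of_le (by linarith) (neg_le_abs x)
        · exact lt_of_lt_of_le hx (le_abs_self x)
      rw [hsupp x hx', zero_mul, zero_mul]
  have hCS : ‖(inner ℂ e th : ℂ)‖ ≤ ‖e‖ * ‖th‖ := norm_inner_le_norm e th
  have he2 : ‖e‖ ^ 2 = ∫ x, ‖ψ1 x‖ ^ 2 := by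
    rw [normsq]
    refine integral_congr_ae ?_
    filter_upwards [hψ1mem.coeFn_toLp] with x hx
    rw [he, hx]
  -- compute the integral
  set p : ℝ → ℝ := fun x => ‖φ x‖ ^ 2 with hp
  set G : ℝ → ℝ := Set.indicator (Icc (-δ) δ) (fun v => p (v - k)) with hG
  have hccn : ‖cc ^ n‖ ^ 2 = (2⁻¹ : ℝ) ^ n := by
    rw [norm_pow, ← pow_mul, mul_comm n 2, pow_mul, norm_cc_sq]
  have hpt : ∀ x : ℝ, ‖ψ1 x‖ ^ 2 = (2⁻¹ : ℝ) ^ n * G (x / 2 ^ n) := by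
    intro x
    have hmemiff : x ∈ K ↔ x / 2 ^ n ∈ Icc (-δ) δ := by
      rw [hK, Set.mem_Icc, Set.mem_Icc, hδ, ← neg_div,
        div_le_div_iff_of_pos_right h2npos, div_le_div_iff_of_pos_right h2npos]
    by_cases hx : x ∈ K
    · rw [hψ1, Set.indicator_of_mem hx, hG,
        Set.indicator_of_mem (hmemiff.mp hx)]
      rw [hψ]
      rw [norm_mul, mul_pow, hccn]
    · rw [hψ1, Set.indicator_of_notMem hx, hG,
        Set.indicator_of_notMem (fun hc => hx (hmemiff.mpr hc))]
      simp
  have hint : ∫ x, ‖ψ1 x‖ ^ 2 = ∫ x in Icc (-δ - k) (δ - k), p x := by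
    have hGval : ∀ v : ℝ, G (v + k) = Set.indicator (Icc (-δ - k) (δ - k)) p v := by
      intro v
      by_cases hv : v ∈ Icc (-δ - k) (δ - k)
      · rw [Set.mem_Icc] at hv
        have hv' : v + k ∈ Icc (-δ) δ := by
          rw [Set.mem_Icc]; constructor <;> linarith [hv.1, hv.2]
        rw [hG, Set.indicator_of_mem hv', Set.indicator_of_mem (Set.mem_Icc.mpr hv),
          add_sub_cancel_right]
      · rw [Set.mem_Icc, not_and_or] at hv
        have hv' : v + k ∉ Icc (-δ) δ := by
          rw [Set.mem_Icc, not_and_or]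
          rcases hv with h | h
          · left; intro hc; exact h (by linarith)
          · right; intro hc; exact h (by linarith)
        rw [hG, Set.indicator_of_notMem hv',
          Set.indicator_of_notMem (by rw [Set.mem_Icc, not_and_or]; exact hv)]
    calc ∫ x, ‖ψ1 x‖ ^ 2 = ∫ x, (2⁻¹ : ℝ) ^ n * G (x / 2 ^ n) := by
          exact integral_congr_ae (Eventually.of_forall hpt)
      _ = (2⁻¹ : ℝ) ^ n * ∫ x, G (x / 2 ^ n) := integral_const_mul _ _
      _ = (2⁻¹ : ℝ) ^ n * (|(2 : ℝ) ^ n| • ∫ v, G v) := by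
          rw [Measure.integral_comp_div G (2 ^ n)]
      _ = ∫ v, G v := by
          rw [abs_of_pos h2npos, smul_eq_mul, ← mul_assoc, ← mul_pow]
          norm_num
      _ = ∫ v, G (v + k) := (integral_add_right_eq_self G (k : ℝ)).symm
      _ = ∫ v, Set.indicator (Icc (-δ - k) (δ - k)) p v :=
          integral_congr_ae (Eventually.of_forall hGval)
      _ = ∫ v in Icc (-δ - k) (δ - k), p v := integral_indicator measurableSet_Icc
  rw [hie]
  calc ‖(inner ℂ e th : ℂ)‖ ^ 2 ≤ (‖e‖ * ‖th‖) ^ 2 := by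
        have h0 : (0:ℝ) ≤ ‖(inner ℂ e th : ℂ)‖ := norm_nonneg _
        nlinarith
    _ = ‖th‖ ^ 2 * ∫ x in Icc (-δ - k) (δ - k), p x := by
        rw [mul_pow, he2, hint]; ring

include hU in
lemma decay {h0 : ℝ → ℂ} (hh : MemLp h0 2 (volume : Measure ℝ))
    (R : ℝ) (hsupp : ∀ x : ℝ, R < |x| → h0 x = 0) :
    Tendsto (fun n : ℕ =>
        ∑' k : ℤ, ‖(inner ℂ ((U ^ n) (phiT φ hφ k)) (hh.toLp h0) : ℂ)‖ ^ 2)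
      atTop (nhds 0) := by
  set th := hh.toLp h0 with hth
  set p : ℝ → ℝ := fun x => ‖φ x‖ ^ 2 with hp
  set I : ℕ → ℤ → Set ℝ :=
    fun n k => Icc (-(R / 2 ^ n) - k) (R / 2 ^ n - k) with hI
  set E : ℕ → Set ℝ := fun n => ⋃ k : ℤ, I n k with hE
  have hpint : Integrable p (volume : Measure ℝ) := p_integrable φ hφ
  have hImeas : ∀ n k, MeasurableSet (I n k) := fun n k => measurableSet_Icc
  have hmeasE : ∀ n, MeasurableSet (E n) :=
    fun n => MeasurableSet.iUnion fun k => hImeas n k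
  have hδ0 : Tendsto (fun n : ℕ => R / 2 ^ n) atTop (nhds 0) := by
    have h1 : Tendsto (fun n : ℕ => ((2 : ℝ)⁻¹) ^ n) atTop (nhds 0) := by
      apply tendsto_pow_atTop_nhds_zero_of_lt_one <;> norm_num
    have h2 := h1.const_mul R
    rw [mul_zero] at h2
    refine h2.congr fun n => ?_
    rw [inv_pow, ← div_eq_mul_inv]
  have hdisj : ∀ n : ℕ, R / 2 ^ n < 2⁻¹ →
      Pairwise (Function.onFun Disjoint fun k : ℤ => I n k) := by
    intro n hn j l hjl
    refine Set.disjoint_left.mpr fun x hxj hxl => ?_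
    rw [hI, Set.mem_Icc] at hxj hxl
    have h1 : |x + j| ≤ R / 2 ^ n := by
      rw [abs_le]; constructor <;> linarith [hxj.1, hxj.2]
    have h2 : |x + l| ≤ R / 2 ^ n := by
      rw [abs_le]; constructor <;> linarith [hxl.1, hxl.2]
    have h3 : (1 : ℝ) ≤ |((j - l : ℤ) : ℝ)| := by
      exact_mod_cast Int.one_le_abs (sub_ne_zero.mpr hjl)
    have h4 : |((j - l : ℤ) : ℝ)| = |(x + j) - (x + l)| := by push_cast; ring_nf
    have h5 : |(x + j) - (x + l)| ≤ |x + j| + |x + l| := abs_sub _ _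
    linarith
  have hEtend : Tendsto (fun n => ∫ x in E n, p x) atTop (nhds 0) := by
    have hconv : Tendsto (fun n => ∫ x, (E n).indicator p x) atTop
        (nhds (∫ _ : ℝ, (0 : ℝ))) := by
      refine tendsto_integral_of_dominated_convergence p
        (fun n => hpint.aestronglyMeasurable.indicator (hmeasE n)) hpint
        (fun n => Eventually.of_forall fun x => ?_) ?_
      · by_cases hx : x ∈ E n
        · rw [Set.indicator_of_mem hx, Real.norm_eq_abs,
            _root_.abs_of_nonneg (sq_nonneg _)]
        · rw [Set.indicator_of_notMem hx, norm_zero]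
          exact sq_nonneg _
      · have hZ : volume (Set.range fun m : ℤ => (m : ℝ)) = 0 :=
          (Set.countable_range _).measure_zero _
        have hae : ∀ᵐ x : ℝ ∂(volume : Measure ℝ),
            x ∉ Set.range fun m : ℤ => (m : ℝ) := by
          rw [ae_iff]
          simpa [not_not, Set.range] using hZ
        filter_upwards [hae] with x hx
        have hd : 0 < |x - round x| := by
          rw [abs_pos, sub_ne_zero]
          intro hc
          exact hx ⟨round x, hc.symm⟩
        have hev : ∀ᶠ n : ℕ in atTop, R / 2 ^ n < |x - round x| :=
          hδ0.eventually (gt_mem_nhds hd)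
        refine Tendsto.congr' ?_ tendsto_const_nhds
        filter_upwards [hev] with n hn
        have hxE : x ∉ E n := by
          intro hxE
          rw [hE, Set.mem_iUnion] at hxE
          obtain ⟨k, hk⟩ := hxE
          rw [hI, Set.mem_Icc] at hk
          have h1 : |x - ((-k : ℤ) : ℝ)| ≤ R / 2 ^ n := by
            push_cast
            rw [abs_le]
            constructor <;> linarith [hk.1, hk.2]
          have h2 := round_le x (-k)
          linarith [h2.trans h1]
        exact (Set.indicator_of_notMem hxE p).symm
    have heq : ∀ n, ∫ x in E n, p x = ∫ x, (E n).indicator p x :=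
      fun n => (integral_indicator (hmeasE n)).symm
    rw [integral_zero] at hconv
    exact hconv.congr fun n => (heq n).symm
  have hbound : ∀ᶠ n : ℕ in atTop,
      (∑' k : ℤ, ‖(inner ℂ ((U ^ n) (phiT φ hφ k)) th : ℂ)‖ ^ 2)
        ≤ ‖th‖ ^ 2 * ∫ x in E n, p x := by
    filter_upwards [hδ0.eventually (gt_mem_nhds (by norm_num : (0:ℝ) < 2⁻¹))]
      with n hn
    have hHS : HasSum (fun k : ℤ => ∫ x in I n k, p x) (∫ x in E n, p x) :=
      hasSum_integral_iUnion (hImeas n) (hdisj n hn) hpint.integrableOn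
    have hsummand : ∀ k : ℤ,
        ‖(inner ℂ ((U ^ n) (phiT φ hφ k)) th : ℂ)‖ ^ 2
          ≤ ‖th‖ ^ 2 * ∫ x in I n k, p x :=
      fun k => term_bound U hU φ hφ n k hh R hsupp
    have hsumm2 : Summable (fun k : ℤ => ‖th‖ ^ 2 * ∫ x in I n k, p x) :=
      hHS.summable.mul_left _
    have hsumm1 : Summable (fun k : ℤ =>
        ‖(inner ℂ ((U ^ n) (phiT φ hφ k)) th : ℂ)‖ ^ 2) :=
      Summable.of_nonneg_of_le (fun k => sq_nonneg _) hsummand hsumm2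
    calc ∑' k : ℤ, ‖(inner ℂ ((U ^ n) (phiT φ hφ k)) th : ℂ)‖ ^ 2
        ≤ ∑' k : ℤ, ‖th‖ ^ 2 * ∫ x in I n k, p x :=
          Summable.tsum_le_tsum hsummand hsumm1 hsumm2
      _ = ‖th‖ ^ 2 * ∑' k : ℤ, ∫ x in I n k, p x := tsum_mul_left
      _ = ‖th‖ ^ 2 * ∫ x in E n, p x := by rw [hHS.tsum_eq]
  have hrhs : Tendsto (fun n => ‖th‖ ^ 2 * ∫ x in E n, p x) atTop (nhds 0) := by
    have := hEtend.const_mul (‖th‖ ^ 2)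
    rwa [mul_zero] at this
  exact squeeze_zero'
    (Eventually.of_forall fun n => tsum_nonneg fun k => sq_nonneg _)
    hbound hrhs

end Decay

end Stmt15Aux

set_option maxHeartbeats 1000000 in
open Stmt15Aux Filter in
/-- If the integer translates `{φ(· − k)}` form a frame for
the closed subspace `𝒱₀` they span, and `(Uf)(x) = 2^{-1/2} f(x/2)`, then
`⋂_{n≥0} Uⁿ𝒱₀ = {0}`. -/
theorem stmt15 (φ : ℝ → ℂ) (hφ : MemLp φ 2 (volume : Measure ℝ))
    (U : Lp ℂ 2 (volume : Measure ℝ) →L[ℂ] Lp ℂ 2 (volume : Measure ℝ))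
    (hU : ∀ f : Lp ℂ 2 (volume : Measure ℝ),
      ⇑(U f) =ᵐ[volume] fun x => ((Real.sqrt 2 : ℂ))⁻¹ * f (x / 2))
    (V0 : Set (Lp ℂ 2 (volume : Measure ℝ)))
    (hV0 : V0 = closure (Submodule.span ℂ
      {h : Lp ℂ 2 (volume : Measure ℝ) |
        ∃ k : ℤ, ⇑h =ᵐ[volume] fun x => φ (x - k)} : Set (Lp ℂ 2 (volume : Measure ℝ))))
    (c1 c2 : ℝ) (hc1 : 0 < c1) (hc12 : c1 ≤ c2)
    (hframe : ∀ f ∈ V0,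
      c1 * ‖f‖ ^ 2 ≤ ∑' k : ℤ, ‖∫ x : ℝ, conj (φ (x - k)) * f x‖ ^ 2 ∧
      ∑' k : ℤ, ‖∫ x : ℝ, conj (φ (x - k)) * f x‖ ^ 2 ≤ c2 * ‖f‖ ^ 2) :
    ⋂ n : ℕ, (⇑(U ^ n) '' V0) = {(0 : Lp ℂ 2 (volume : Measure ℝ))} := by
  have h0V : (0 : Lp ℂ 2 (volume : Measure ℝ)) ∈ V0 := by
    rw [hV0]
    exact subset_closure (Submodule.zero_mem _)
  refine Set.Subset.antisymm ?_ ?_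
  swap
  · intro z hz
    rw [Set.mem_singleton_iff] at hz
    subst hz
    exact Set.mem_iInter.mpr fun n => ⟨0, h0V, map_zero _⟩
  intro f hf
  rw [Set.mem_iInter] at hf
  rw [Set.mem_singleton_iff]
  have hc2 : (0:ℝ) < c2 := lt_of_lt_of_le hc1 hc12
  have key : ∀ ε : ℝ, 0 < ε → c1 * ‖f‖ ^ 2 ≤ 2 * c2 * ε := by
    intro ε hε
    obtain ⟨g0, hg0supp, hg0close, hg0cont, hg0mem⟩ :=
      (Lp.memLp f).exists_hasCompactSupport_eLpNorm_sub_le (p := 2)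
        (by norm_num) (ε := ENNReal.ofReal (Real.sqrt ε))
        (by simp [ENNReal.ofReal_eq_zero, not_le, Real.sqrt_pos.mpr hε])
    set th := hg0mem.toLp g0 with hth
    have hdiff : ‖f - th‖ ^ 2 ≤ ε := by
      have h1 : ‖f - th‖ = (eLpNorm (⇑f - g0) 2 volume).toReal := by
        rw [MeasureTheory.Lp.norm_def]
        congr 1
        apply eLpNorm_congr_ae
        filter_upwards [MeasureTheory.Lp.coeFn_sub f th, hg0mem.coeFn_toLp]
          with x hx1 hx2
        rw [hx1]
        simp [hth, hx2]
      have h2 : (eLpNorm (⇑f - g0) 2 volume).toReal ≤ Real.sqrt ε :=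
        ENNReal.toReal_le_of_le_ofReal (Real.sqrt_nonneg ε) hg0close
      have h3 : ‖f - th‖ ^ 2 ≤ Real.sqrt ε ^ 2 := by
        rw [h1]
        exact pow_le_pow_left₀ ENNReal.toReal_nonneg h2 2
      rwa [Real.sq_sqrt hε.le] at h3
    obtain ⟨R, hR0, hRsupp⟩ : ∃ R : ℝ, 0 < R ∧ ∀ x : ℝ, R < |x| → g0 x = 0 := by
      obtain ⟨r, hr⟩ :=
        (Metric.isBounded_iff_subset_closedBall 0).mp hg0supp.isBounded
      refine ⟨max r 1, lt_of_lt_of_le one_pos (le_max_right r 1), fun x hx => ?_⟩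
      apply image_eq_zero_of_notMem_tsupport
      intro hmem
      have h1 := hr hmem
      rw [Metric.mem_closedBall, Real.dist_eq, sub_zero] at h1
      have := le_max_left r 1
      linarith
    have hdecay := decay U hU φ hφ hg0mem R hRsupp
    have hpern : ∀ n : ℕ, c1 * ‖f‖ ^ 2 ≤
        2 * (∑' k : ℤ, ‖(inner ℂ ((U ^ n) (phiT φ hφ k)) th : ℂ)‖ ^ 2) +
          2 * c2 * ε := by
      intro n
      obtain ⟨g, hgV, hgf⟩ := hf n
      have hnorm : ‖f‖ = ‖g‖ := by rw [← hgf, norm_upow U hU]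
      have hlow := frame_lower φ hφ V0 c1 c2 hframe g hgV
      have hterm : ∀ k : ℤ,
          (inner ℂ (phiT φ hφ k) g : ℂ) = inner ℂ ((U ^ n) (phiT φ hφ k)) f := by
        intro k
        rw [← hgf, inner_upow U hU]
      have hadj : ∀ (y : Lp ℂ 2 (volume : Measure ℝ)) (k : ℤ),
          (inner ℂ ((U ^ n) (phiT φ hφ k)) y : ℂ)
            = inner ℂ (phiT φ hφ k) (ContinuousLinearMap.adjoint (U ^ n) y) :=
        fun y k => (ContinuousLinearMap.adjoint_inner_right _ _ _).symm
      have hupA : ∀ y : Lp ℂ 2 (volume : Measure ℝ),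
          Summable (fun k : ℤ => ‖(inner ℂ ((U ^ n) (phiT φ hφ k)) y : ℂ)‖ ^ 2) ∧
          (∑' k : ℤ, ‖(inner ℂ ((U ^ n) (phiT φ hφ k)) y : ℂ)‖ ^ 2)
            ≤ c2 * ‖y‖ ^ 2 := by
        intro y
        have h1 := upper_all φ hφ V0 hV0 c1 c2 hc1 hc12 hframe
          (ContinuousLinearMap.adjoint (U ^ n) y)
        constructor
        · refine h1.1.congr fun k => ?_
          rw [hadj y k]
        · have h2 : (∑' k : ℤ, ‖(inner ℂ ((U ^ n) (phiT φ hφ k)) y : ℂ)‖ ^ 2)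
              = ∑' k : ℤ, ‖(inner ℂ (phiT φ hφ k)
                  (ContinuousLinearMap.adjoint (U ^ n) y) : ℂ)‖ ^ 2 :=
            tsum_congr fun k => by rw [hadj y k]
          rw [h2]
          refine le_trans h1.2 ?_
          have h3 := norm_adj_le U hU n y
          have h4 : ‖ContinuousLinearMap.adjoint (U ^ n) y‖ ^ 2 ≤ ‖y‖ ^ 2 := by
            nlinarith [norm_nonneg (ContinuousLinearMap.adjoint (U ^ n) y)]
          nlinarith
      have hsummf : Summable
          (fun k : ℤ => ‖(inner ℂ ((U ^ n) (phiT φ hφ k)) f : ℂ)‖ ^ 2) := by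
        refine (frame_summable φ hφ V0 c1 c2 hc1 hframe g hgV).congr fun k => ?_
        rw [hterm k]
      have hsplit : ∀ k : ℤ, ‖(inner ℂ ((U ^ n) (phiT φ hφ k)) f : ℂ)‖ ^ 2 ≤
          2 * ‖(inner ℂ ((U ^ n) (phiT φ hφ k)) th : ℂ)‖ ^ 2 +
          2 * ‖(inner ℂ ((U ^ n) (phiT φ hφ k)) (f - th) : ℂ)‖ ^ 2 := by
        intro k
        have h1 : (inner ℂ ((U ^ n) (phiT φ hφ k)) f : ℂ)
            = inner ℂ ((U ^ n) (phiT φ hφ k)) th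
              + inner ℂ ((U ^ n) (phiT φ hφ k)) (f - th) := by
          rw [← inner_add_right]
          congr 1
          abel
        rw [h1]
        have h2 := norm_add_le (inner ℂ ((U ^ n) (phiT φ hφ k)) th : ℂ)
          (inner ℂ ((U ^ n) (phiT φ hφ k)) (f - th) : ℂ)
        nlinarith [norm_nonneg (inner ℂ ((U ^ n) (phiT φ hφ k)) th : ℂ),
          norm_nonneg (inner ℂ ((U ^ n) (phiT φ hφ k)) (f - th) : ℂ),
          norm_nonneg ((inner ℂ ((U ^ n) (phiT φ hφ k)) th : ℂ)
            + (inner ℂ ((U ^ n) (phiT φ hφ k)) (f - th) : ℂ)),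
          sq_nonneg (‖(inner ℂ ((U ^ n) (phiT φ hφ k)) th : ℂ)‖
            - ‖(inner ℂ ((U ^ n) (phiT φ hφ k)) (f - th) : ℂ)‖)]
      calc c1 * ‖f‖ ^ 2 = c1 * ‖g‖ ^ 2 := by rw [hnorm]
        _ ≤ ∑' k : ℤ, ‖(inner ℂ (phiT φ hφ k) g : ℂ)‖ ^ 2 := hlow
        _ = ∑' k : ℤ, ‖(inner ℂ ((U ^ n) (phiT φ hφ k)) f : ℂ)‖ ^ 2 :=
            tsum_congr fun k => by rw [hterm k]
        _ ≤ ∑' k : ℤ, (2 * ‖(inner ℂ ((U ^ n) (phiT φ hφ k)) th : ℂ)‖ ^ 2 +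
              2 * ‖(inner ℂ ((U ^ n) (phiT φ hφ k)) (f - th) : ℂ)‖ ^ 2) :=
            Summable.tsum_le_tsum hsplit hsummf
              (((hupA th).1.mul_left 2).add (((hupA (f - th)).1).mul_left 2))
        _ = 2 * (∑' k : ℤ, ‖(inner ℂ ((U ^ n) (phiT φ hφ k)) th : ℂ)‖ ^ 2) +
              2 * (∑' k : ℤ, ‖(inner ℂ ((U ^ n) (phiT φ hφ k)) (f - th) : ℂ)‖ ^ 2)
            := by
            rw [Summable.tsum_add ((hupA th).1.mul_left 2) (((hupA (f - th)).1).mul_left 2),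
              tsum_mul_left, tsum_mul_left]
        _ ≤ 2 * (∑' k : ℤ, ‖(inner ℂ ((U ^ n) (phiT φ hφ k)) th : ℂ)‖ ^ 2) +
              2 * c2 * ε := by
            have h5 := (hupA (f - th)).2
            nlinarith [hdiff]
    have hlim : Tendsto (fun n : ℕ =>
        2 * (∑' k : ℤ, ‖(inner ℂ ((U ^ n) (phiT φ hφ k)) th : ℂ)‖ ^ 2) +
          2 * c2 * ε) atTop (nhds (2 * 0 + 2 * c2 * ε)) :=
      (hdecay.const_mul 2).add tendsto_const_nhds
    have := ge_of_tendsto' hlim hpern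
    linarith
  have hf0 : ‖f‖ = 0 := by
    by_contra hpos
    have hfpos : 0 < ‖f‖ ^ 2 := by
      have := norm_nonneg f
      have : 0 < ‖f‖ := lt_of_le_of_ne this (Ne.symm hpos)
      positivity
    have hkey := key (c1 * ‖f‖ ^ 2 / (4 * c2)) (by positivity)
    have heq : 2 * c2 * (c1 * ‖f‖ ^ 2 / (4 * c2)) = c1 * ‖f‖ ^ 2 / 2 := by
      field_simp
      ring
    rw [heq] at hkey
    nlinarith
  exact norm_eq_zero.mp hf0
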